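/- Let A be a Banach *-algebra with an approximate identity, and let f be a continuous positive form on A. Then f extends to a unique positive form f̃ on the unital extension à = ℂ ⊕ A of A such that f̃(1) = ‖f‖, where ‖f‖ = sup_{‖a‖=1} |f(a)|. -/

import Mathlib

open scoped ComplexOrder

section Aux

variable {A : Type*} [NormedRing A] [StarRing A] [NormedAlgebra ℂ A] [StarModule ℂ A]
variable (f : A →L[ℂ] ℂ)

lemma my_aux_im (hpos : ∀ a, 0 ≤ f (star a * a)) (a : A) : (f (star a * a)).im = 0 :=
  (Complex.nonneg_iff.mp (hpos a)).2.symm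

lemma my_aux_re (hpos : ∀ a, 0 ≤ f (star a * a)) (a : A) : 0 ≤ (f (star a * a)).re :=
  (Complex.nonneg_iff.mp (hpos a)).1

lemma my_aux_expand (a b : A) : f (star (a + b) * (a + b)) =
    f (star a * a) + (f (star a * b) + f (star b * a)) + f (star b * b) := by
  simp only [star_add, add_mul, mul_add, map_add]
  ring

lemma my_aux_key (hpos : ∀ a, 0 ≤ f (star a * a)) (a b : A) :
    (f (star a * b) + f (star b * a)).im = 0 := by
  have h := my_aux_im f hpos (a + b)
  rw [my_aux_expand f, Complex.add_im, Complex.add_im, my_aux_im f hpos a,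
    my_aux_im f hpos b] at h
  linarith

lemma my_aux_herm (hpos : ∀ a, 0 ≤ f (star a * a)) (a b : A) :
    f (star b * a) = (starRingEnd ℂ) (f (star a * b)) := by
  have h1 : (f (star a * b) + f (star b * a)).im = 0 := my_aux_key f hpos a b
  have h2 := my_aux_key f hpos a ((Complex.I : ℂ) • b)
  rw [mul_smul_comm, map_smul, star_smul, smul_mul_assoc, map_smul] at h2
  simp only [smul_eq_mul, Complex.star_def, Complex.conj_I, Complex.add_im, Complex.mul_im,
    Complex.I_re, Complex.I_im, Complex.neg_re, Complex.neg_im, zero_mul, one_mul, mul_zero,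
    neg_zero, zero_add, add_zero, neg_mul] at h2
  rw [Complex.add_im] at h1
  apply Complex.ext
  · rw [Complex.conj_re]; linarith
  · rw [Complex.conj_im]; linarith

lemma my_aux_cs (hpos : ∀ a, 0 ≤ f (star a * a)) (a b : A) :
    ‖f (star a * b)‖ ^ 2 ≤ (f (star a * a)).re * (f (star b * b)).re := by
  by_cases hz : f (star a * b) = 0
  · rw [hz]
    simpa using mul_nonneg (my_aux_re f hpos a) (my_aux_re f hpos b)
  set p := f (star a * b) with hp
  set s : ℝ := ‖p‖ with hs
  have hs0 : 0 < s := norm_pos_iff.mpr hz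
  set t : ℂ := (starRingEnd ℂ) p / (s : ℂ) with ht
  have hps : (starRingEnd ℂ) p * p = ((s : ℂ)) ^ 2 := by
    rw [mul_comm, Complex.mul_conj, Complex.normSq_eq_norm_sq]
    norm_cast
  have htp : t * p = (s : ℂ) := by
    rw [ht, div_mul_eq_mul_div, hps]
    rw [sq]
    rw [mul_div_assoc, div_self (by exact_mod_cast hs0.ne'), mul_one]
  have htt : (starRingEnd ℂ) t * t = 1 := by
    rw [ht, map_div₀, Complex.conj_conj, Complex.conj_ofReal]
    rw [div_mul_div_comm, mul_comm p _, hps, sq]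
    rw [div_self]
    positivity
  have key : ∀ r : ℝ, 0 ≤ (f (star b * b)).re * (r * r) + (2 * s) * r
      + (f (star a * a)).re := by
    intro r
    set c : ℂ := (r : ℂ) * t with hc
    have hre := my_aux_re f hpos (a + c • b)
    rw [my_aux_expand f] at hre
    have e1 : f (star a * (c • b)) = ((r * s : ℝ) : ℂ) := by
      rw [mul_smul_comm, map_smul, smul_eq_mul, ← hp, hc, mul_assoc, htp]
      push_cast; ring
    have e2 : f (star (c • b) * a) = ((r * s : ℝ) : ℂ) := by
      rw [star_smul, smul_mul_assoc, map_smul, my_aux_herm f hpos,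
        Complex.star_def, smul_eq_mul, ← hp, ← map_mul, hc, mul_assoc, htp]
      rw [← Complex.ofReal_mul, Complex.conj_ofReal]
    have e3 : f (star (c • b) * (c • b)) = ((r * r : ℝ) : ℂ) * f (star b * b) := by
      rw [star_smul, smul_mul_assoc, mul_smul_comm, map_smul, map_smul, smul_eq_mul,
        smul_eq_mul, Complex.star_def, ← mul_assoc, hc, map_mul, Complex.conj_ofReal]
      have : (r : ℂ) * ((starRingEnd ℂ) t) * ((r : ℂ) * t) =
          ((r : ℂ) * (r : ℂ)) * ((starRingEnd ℂ) t * t) := by ring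
      rw [this, htt]
      push_cast; ring
    rw [e1, e2, e3] at hre
    simp only [Complex.add_re, Complex.ofReal_re, Complex.mul_re, Complex.ofReal_im,
      zero_mul, sub_zero] at hre
    nlinarith [hre]
  have hd := discrim_le_zero key
  rw [discrim] at hd
  have hab := my_aux_re f hpos a
  have hbb := my_aux_re f hpos b
  nlinarith [hd]

end Aux

set_option maxHeartbeats 1600000 in
/-- Let `A` be a Banach `*`-algebra with an approximate identity
(a net `u : ι → A` over a directed index set with `‖u i‖ < 1` and
`‖u i * a - a‖ → 0`, `‖a * u i - a‖ → 0` for every `a`), and let `f` be a continuous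
positive form on `A`.  Then `f` extends to a unique positive form `F` on the unital
extension `ℂ ⊕ A` of `A` such that `F 1 = ‖f‖`. -/
theorem positive_form_extends_to_unitization
    {A : Type*} [NormedRing A] [StarRing A] [NormedStarGroup A]
    [NormedAlgebra ℂ A] [StarModule ℂ A] [CompleteSpace A]
    {ι : Type*} [Nonempty ι] [Preorder ι] [IsDirected ι (· ≤ ·)]
    (u : ι → A) (hu_norm : ∀ i, ‖u i‖ < 1)
    (hu_left : ∀ a : A, Filter.Tendsto (fun i => ‖u i * a - a‖) Filter.atTop (nhds 0))
    (hu_right : ∀ a : A, Filter.Tendsto (fun i => ‖a * u i - a‖) Filter.atTop (nhds 0))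
    (f : A →L[ℂ] ℂ) (hpos : ∀ a, 0 ≤ f (star a * a)) :
    ∃! F : Unitization ℂ A →ₗ[ℂ] ℂ,
      (∀ a : A, F (Unitization.inr a) = f a) ∧
      (∀ x, 0 ≤ F (star x * x)) ∧
      F 1 = (‖f‖ : ℂ) := by
  haveI : (Filter.atTop : Filter ι).NeBot :=
    Filter.atTop_neBot_iff.mpr ⟨‹Nonempty ι›, ‹IsDirected ι (· ≤ ·)›⟩
  set N : ℝ := ‖f‖ with hNdef
  have hN0 : 0 ≤ N := norm_nonneg _
  -- convergence facts
  have hconv2 : ∀ a : A, Filter.Tendsto (fun i => f (star (u i) * a))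
      Filter.atTop (nhds (f a)) := by
    intro a
    apply (f.continuous.tendsto _).comp
    rw [tendsto_iff_norm_sub_tendsto_zero]
    have heq : (fun i => ‖star (u i) * a - a‖) = fun i => ‖star a * u i - star a‖ := by
      funext i
      rw [← norm_star (star a * u i - star a)]
      congr 1
      simp [star_sub, star_mul]
    rw [heq]
    exact hu_right (star a)
  -- hermiticity of f
  have hstar : ∀ a : A, f (star a) = (starRingEnd ℂ) (f a) := by
    intro a
    have h1 : Filter.Tendsto (fun i => f (star a * u i)) Filter.atTop (nhds (f (star a))) := by
      apply (f.continuous.tendsto _).comp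
      rw [tendsto_iff_norm_sub_tendsto_zero]
      exact hu_right (star a)
    have h2 : Filter.Tendsto (fun i => f (star a * u i)) Filter.atTop
        (nhds ((starRingEnd ℂ) (f a))) := by
      have heq : (fun i => f (star a * u i)) =
          fun i => (starRingEnd ℂ) (f (star (u i) * a)) := by
        funext i
        exact my_aux_herm (f : A →L[ℂ] ℂ) hpos (u i) a
      rw [heq]
      exact (Complex.continuous_conj.tendsto _).comp (hconv2 a)
    exact tendsto_nhds_unique h1 h2
  -- key bound
  have hbound : ∀ a : A, ‖f a‖ ^ 2 ≤ N * (f (star a * a)).re := by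
    intro a
    have h1 : Filter.Tendsto (fun i => ‖f (star (u i) * a)‖ ^ 2) Filter.atTop
        (nhds (‖f a‖ ^ 2)) :=
      (((continuous_norm.tendsto _).comp (hconv2 a)).pow 2)
    refine le_of_tendsto h1 ?_
    filter_upwards with i
    calc ‖f (star (u i) * a)‖ ^ 2
        ≤ (f (star (u i) * u i)).re * (f (star a * a)).re :=
          my_aux_cs (f : A →L[ℂ] ℂ) hpos (u i) a
      _ ≤ N * (f (star a * a)).re := by
          refine mul_le_mul_of_nonneg_right ?_ (my_aux_re (f : A →L[ℂ] ℂ) hpos a)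
          have h3 : (f (star (u i) * u i)).re ≤ ‖f (star (u i) * u i)‖ := by
            exact Complex.re_le_norm _
          have h4 : ‖f (star (u i) * u i)‖ ≤ N * ‖star (u i) * u i‖ :=
            f.le_opNorm _
          have h5 : ‖star (u i) * u i‖ ≤ 1 := by
            calc ‖star (u i) * u i‖ ≤ ‖star (u i)‖ * ‖u i‖ := norm_mul_le _ _
              _ = ‖u i‖ * ‖u i‖ := by rw [norm_star]
              _ ≤ 1 * 1 := by
                  have := (hu_norm i).le
                  exact mul_le_mul this this (norm_nonneg _) zero_le_one
              _ = 1 := by ring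
          nlinarith [h3, h4, h5]
  -- the extension
  refine ⟨{ toFun := fun x => (N : ℂ) * x.fst + f x.snd,
            map_add' := by
              intro x y
              simp only [Unitization.fst_add, Unitization.snd_add, map_add]
              ring,
            map_smul' := by
              intro c x
              simp only [Unitization.fst_smul, Unitization.snd_smul, map_smul,
                smul_eq_mul, RingHom.id_apply]
              ring }, ⟨?_, ?_, ?_⟩, ?_⟩
  · intro a
    simp [Unitization.fst_inr, Unitization.snd_inr]
  · intro x
    simp only [LinearMap.coe_mk, AddHom.coe_mk]
    set l : ℂ := x.fst with hl
    set a : A := x.snd with ha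
    have hfst : (star x * x).fst = (starRingEnd ℂ) l * l := by
      rw [Unitization.fst_mul, Unitization.fst_star, Complex.star_def]
    have hsnd : (star x * x).snd = star a * a + ((starRingEnd ℂ) l • a + l • star a) := by
      simp only [Unitization.snd_mul, Unitization.fst_star, Unitization.snd_star,
        Complex.star_def]
      abel
    rw [hfst, hsnd]
    have hmap : f (star a * a + ((starRingEnd ℂ) l • a + l • star a)) =
        f (star a * a) + ((starRingEnd ℂ) l * f a + l * (starRingEnd ℂ) (f a)) := by
      rw [map_add, map_add, map_smul, map_smul, smul_eq_mul, smul_eq_mul, hstar a]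
    rw [hmap]
    set z : ℂ := (starRingEnd ℂ) l * f a with hz
    have hconjz : l * (starRingEnd ℂ) (f a) = (starRingEnd ℂ) z := by
      rw [hz, map_mul, Complex.conj_conj]
    rw [hconjz]
    have hll : (starRingEnd ℂ) l * l = ((‖l‖ ^ 2 : ℝ) : ℂ) := by
      rw [mul_comm, Complex.mul_conj, Complex.normSq_eq_norm_sq]
    rw [hll]
    set w : ℂ := f (star a * a) with hw
    have hwim : w.im = 0 := my_aux_im (f : A →L[ℂ] ℂ) hpos a
    have hwre : 0 ≤ w.re := my_aux_re (f : A →L[ℂ] ℂ) hpos a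
    rw [Complex.nonneg_iff]
    constructor
    · simp only [Complex.add_re, Complex.mul_re, Complex.ofReal_re, Complex.ofReal_im,
        zero_mul, sub_zero, Complex.conj_re]
      have hzre : |z.re| ≤ ‖l‖ * ‖f a‖ := by
        calc |z.re| ≤ ‖z‖ := Complex.abs_re_le_norm z
          _ = ‖z‖ := rfl
          _ = ‖(starRingEnd ℂ) l‖ * ‖f a‖ := norm_mul _ _
          _ = ‖l‖ * ‖f a‖ := by rw [RCLike.norm_conj]
      have hfa2 : ‖f a‖ ^ 2 ≤ N * w.re := hbound a
      have hfa : ‖f a‖ ≤ Real.sqrt N * Real.sqrt w.re := by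
        rw [← Real.sqrt_mul hN0]
        rw [← Real.sqrt_sq (norm_nonneg (f a))]
        exact Real.sqrt_le_sqrt hfa2
      have habs := abs_le.mp hzre
      nlinarith [sq_nonneg (Real.sqrt N * ‖l‖ - Real.sqrt w.re), Real.sq_sqrt hN0,
        Real.sq_sqrt hwre, Real.sqrt_nonneg N, Real.sqrt_nonneg w.re,
        norm_nonneg l, norm_nonneg (f a), habs.1, hfa,
        mul_le_mul_of_nonneg_left hfa (norm_nonneg l)]
    · simp only [Complex.add_im, Complex.mul_im, Complex.ofReal_re, Complex.ofReal_im,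
        zero_mul, mul_zero, add_zero, Complex.conj_im, hwim]
      ring
  · simp [Unitization.fst_one, Unitization.snd_one]
  · rintro G ⟨hG1, hG2, hG3⟩
    apply LinearMap.ext
    intro x
    simp only [LinearMap.coe_mk, AddHom.coe_mk]
    have hx : x = (x.fst : ℂ) • (1 : Unitization ℂ A) + Unitization.inr x.snd := by
      have h1 : (x.fst : ℂ) • (1 : Unitization ℂ A) = Unitization.inl x.fst := by
        rw [← Unitization.algebraMap_eq_inl, Algebra.algebraMap_eq_smul_one]
      rw [h1, Unitization.inl_fst_add_inr_snd_eq]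
    conv_lhs => rw [hx]
    rw [map_add, map_smul, hG3, hG1, smul_eq_mul]
    ring
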